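/- Let K be a commutative ring with identity and let m_1, n_1, m_2, n_2 ∈ ℕ satisfy m_2 + n_1 ≥ m_1 ≥ m_2 and n_1 ≥ n_2. Then R^{m_1,n_1}(K) is a normal subgroup of R^{m_2,n_2}(K). -/

import Mathlib

open PowerSeries Finset

namespace RiordanPaper

variable {K : Type*} [CommRing K]

noncomputable def comp (f g : PowerSeries K) : PowerSeries K :=
  PowerSeries.mk fun n => ∑ d ∈ Finset.range (n + 1), coeff d f * coeff n (g ^ d)

lemma coeff_comp (f g : PowerSeries K) (n : ℕ) :
    coeff n (comp f g) = ∑ d ∈ Finset.range (n + 1), coeff d f * coeff n (g ^ d) := by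
  simp [comp]

lemma coeff_pow_eq_zero {g : PowerSeries K} (hg : constantCoeff g = 0) {n d : ℕ}
    (h : n < d) : coeff n (g ^ d) = 0 := by
  have hdvd : (X : PowerSeries K) ^ d ∣ g ^ d :=
    pow_dvd_pow_of_dvd (PowerSeries.X_dvd_iff.2 hg) d
  exact (PowerSeries.X_pow_dvd_iff.1 hdvd) n h

lemma coeff_comp_of_lt {g : PowerSeries K} (hg : constantCoeff g = 0)
    (f : PowerSeries K) {n N : ℕ} (hn : n < N) :
    coeff n (comp f g) = ∑ d ∈ Finset.range N, coeff d f * coeff n (g ^ d) := by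
  rw [coeff_comp]
  apply Finset.sum_subset
  · intro d hd
    simp only [Finset.mem_range] at hd ⊢
    omega
  · intro d _ hd'
    simp only [Finset.mem_range] at hd'
    rw [coeff_pow_eq_zero hg (by omega), mul_zero]

lemma coeff_eval₂ {g : PowerSeries K} (hg : constantCoeff g = 0)
    (P : Polynomial K) (n : ℕ) :
    coeff n (Polynomial.eval₂ C g P)
      = ∑ d ∈ Finset.range (n + 1), P.coeff d * coeff n (g ^ d) := by
  classical
  have h1 : P.natDegree < max (n + 1) (P.natDegree + 1) :=
    lt_of_lt_of_le (Nat.lt_succ_self _) (le_max_right _ _)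
  rw [Polynomial.eval₂_eq_sum_range' C h1 g, map_sum]
  have h2 : ∀ d ∈ Finset.range (max (n + 1) (P.natDegree + 1)),
      coeff n (C (P.coeff d) * g ^ d) = P.coeff d * coeff n (g ^ d) := fun d _ => by
    rw [coeff_C_mul]
  rw [Finset.sum_congr rfl h2]
  symm
  apply Finset.sum_subset
  · intro d hd
    simp only [Finset.mem_range] at hd ⊢
    omega
  · intro d _ hd'
    simp only [Finset.mem_range] at hd'
    rw [coeff_pow_eq_zero hg (by omega), mul_zero]

lemma coeff_comp_eq_eval₂_trunc {g : PowerSeries K} (hg : constantCoeff g = 0)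
    (f : PowerSeries K) {n N : ℕ} (hn : n < N) :
    coeff n (comp f g) = coeff n (Polynomial.eval₂ C g (trunc N f)) := by
  rw [coeff_eval₂ hg, coeff_comp]
  apply Finset.sum_congr rfl
  intro d hd
  simp only [Finset.mem_range] at hd
  rw [PowerSeries.coeff_trunc, if_pos (by omega)]

lemma mul_comp {g : PowerSeries K} (hg : constantCoeff g = 0) (f₁ f₂ : PowerSeries K) :
    comp (f₁ * f₂) g = comp f₁ g * comp f₂ g := by
  ext n
  have key : coeff n (comp (f₁ * f₂) g)
      = coeff n (Polynomial.eval₂ C g (trunc (n + 1) f₁ * trunc (n + 1) f₂)) := by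
    rw [coeff_eval₂ hg, coeff_comp]
    apply Finset.sum_congr rfl
    intro d hd
    simp only [Finset.mem_range] at hd
    congr 1
    rw [Polynomial.coeff_mul, PowerSeries.coeff_mul]
    apply Finset.sum_congr rfl
    intro ab hab
    rw [Finset.HasAntidiagonal.mem_antidiagonal] at hab
    rw [PowerSeries.coeff_trunc, PowerSeries.coeff_trunc, if_pos (by omega), if_pos (by omega)]
  rw [key, Polynomial.eval₂_mul, PowerSeries.coeff_mul, PowerSeries.coeff_mul]
  apply Finset.sum_congr rfl
  intro ab hab
  rw [Finset.HasAntidiagonal.mem_antidiagonal] at hab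
  rw [← coeff_comp_eq_eval₂_trunc hg f₁ (show ab.1 < n + 1 by omega),
    ← coeff_comp_eq_eval₂_trunc hg f₂ (show ab.2 < n + 1 by omega)]

lemma one_comp (g : PowerSeries K) : comp (1 : PowerSeries K) g = 1 := by
  ext n
  rw [coeff_comp, Finset.sum_eq_single 0]
  · simp
  · intro d _ hd0
    simp [PowerSeries.coeff_one, hd0]
  · intro h
    simp at h

lemma comp_X (f : PowerSeries K) : comp f X = f := by
  ext n
  rw [coeff_comp, Finset.sum_eq_single n]
  · rw [coeff_X_pow, if_pos rfl, mul_one]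
  · intro d _ hdn
    rw [coeff_X_pow, if_neg (fun h => hdn h.symm), mul_zero]
  · intro h
    simp at h

lemma X_comp {g : PowerSeries K} (hg : constantCoeff g = 0) : comp X g = g := by
  ext n
  rcases Nat.eq_zero_or_pos n with hn | hn
  · subst hn
    rw [coeff_comp]
    simp [PowerSeries.coeff_X, coeff_zero_eq_constantCoeff_apply, hg]
  · rw [coeff_comp, Finset.sum_eq_single 1]
    · rw [coeff_one_X, pow_one, one_mul]
    · intro d _ hd1
      rw [PowerSeries.coeff_X, if_neg hd1, zero_mul]
    · intro h
      simp only [Finset.mem_range] at h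
      omega

lemma constantCoeff_comp (f g : PowerSeries K) :
    constantCoeff (comp f g) = constantCoeff f := by
  rw [← coeff_zero_eq_constantCoeff_apply, coeff_comp]
  simp

lemma coeff_one_comp (f g : PowerSeries K) :
    coeff 1 (comp f g) = coeff 1 f * coeff 1 g := by
  rw [coeff_comp]
  have : Finset.range 2 = {0, 1} := rfl
  rw [this, Finset.sum_insert (by simp), Finset.sum_singleton, pow_zero, pow_one]
  simp [PowerSeries.coeff_one]

lemma comp_assoc {g k : PowerSeries K} (hg : constantCoeff g = 0)
    (hk : constantCoeff k = 0) (f : PowerSeries K) :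
    comp (comp f g) k = comp f (comp g k) := by
  have hpow : ∀ e : ℕ, (comp g k) ^ e = comp (g ^ e) k := by
    intro e
    induction e with
    | zero => simp [one_comp]
    | succ m ih => rw [pow_succ, pow_succ, ih, mul_comp hk]
  ext n
  rw [coeff_comp, coeff_comp]
  have L1 : ∀ d ∈ Finset.range (n + 1), coeff d (comp f g) * coeff n (k ^ d)
      = ∑ e ∈ Finset.range (n + 1), coeff e f * coeff d (g ^ e) * coeff n (k ^ d) := by
    intro d hd
    simp only [Finset.mem_range] at hd
    rw [coeff_comp_of_lt hg f hd, Finset.sum_mul]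
  rw [Finset.sum_congr rfl L1, Finset.sum_comm]
  apply Finset.sum_congr rfl
  intro e _
  rw [hpow e, coeff_comp, Finset.mul_sum]
  apply Finset.sum_congr rfl
  intro d _
  ring

/-- An element of the Riordan group: a pair `(h, g)` with
`h = 1 + a₁x + ⋯` and `g = x + b₂x² + ⋯`. -/
@[ext]
structure RiordanElem (K : Type*) [CommRing K] where
  h : PowerSeries K
  g : PowerSeries K
  h_zero : constantCoeff h = 1
  g_zero : constantCoeff g = 0
  g_one : coeff 1 g = 1

namespace RiordanElem

noncomputable instance : Mul (RiordanElem K) :=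
  ⟨fun a b => ⟨a.h * comp b.h a.g, comp b.g a.g,
    by rw [map_mul, a.h_zero, one_mul, constantCoeff_comp, b.h_zero],
    by rw [constantCoeff_comp, b.g_zero],
    by rw [coeff_one_comp, b.g_one, a.g_one, one_mul]⟩⟩

noncomputable instance : One (RiordanElem K) :=
  ⟨⟨1, X, map_one _, constantCoeff_X, coeff_one_X⟩⟩

@[simp] lemma mul_h (a b : RiordanElem K) : (a * b).h = a.h * comp b.h a.g := rfl
@[simp] lemma mul_g (a b : RiordanElem K) : (a * b).g = comp b.g a.g := rfl
@[simp] lemma one_h : (1 : RiordanElem K).h = 1 := rfl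
@[simp] lemma one_g : (1 : RiordanElem K).g = X := rfl

noncomputable instance instMonoid : Monoid (RiordanElem K) where
  mul_assoc a b c := by
    ext1
    · show (a.h * comp b.h a.g) * comp c.h (comp b.g a.g)
        = a.h * comp (b.h * comp c.h b.g) a.g
      rw [mul_comp a.g_zero, ← comp_assoc b.g_zero a.g_zero, mul_assoc]
    · show comp c.g (comp b.g a.g) = comp (comp c.g b.g) a.g
      rw [comp_assoc b.g_zero a.g_zero]
  one_mul a := by
    ext1
    · show (1 : PowerSeries K) * comp a.h X = a.h
      rw [comp_X, one_mul]
    · show comp a.g X = a.g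
      exact comp_X a.g
  mul_one a := by
    ext1
    · show a.h * comp 1 a.g = a.h
      rw [one_comp, mul_one]
    · show comp X a.g = a.g
      exact X_comp a.g_zero

end RiordanElem

/-- The Riordan group over `K`, realized as the units of the Riordan monoid. -/
noncomputable abbrev RiordanGroup (K : Type*) [CommRing K] := (RiordanElem K)ˣ

/-- An element of the Nottingham group: `g = x + b₂x² + ⋯`. -/
@[ext]
structure NottinghamElem (K : Type*) [CommRing K] where
  g : PowerSeries K
  g_zero : constantCoeff g = 0
  g_one : coeff 1 g = 1

namespace NottinghamElem

noncomputable instance : Mul (NottinghamElem K) :=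
  ⟨fun a b => ⟨comp b.g a.g,
    by rw [constantCoeff_comp, b.g_zero],
    by rw [coeff_one_comp, b.g_one, a.g_one, one_mul]⟩⟩

noncomputable instance : One (NottinghamElem K) :=
  ⟨⟨X, constantCoeff_X, coeff_one_X⟩⟩

@[simp] lemma mul_g (a b : NottinghamElem K) : (a * b).g = comp b.g a.g := rfl
@[simp] lemma one_g : (1 : NottinghamElem K).g = X := rfl

noncomputable instance instMonoid : Monoid (NottinghamElem K) where
  mul_assoc a b c := by
    ext1
    show comp c.g (comp b.g a.g) = comp (comp c.g b.g) a.g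
    rw [comp_assoc b.g_zero a.g_zero]
  one_mul a := by
    ext1
    show comp a.g X = a.g
    exact comp_X a.g
  mul_one a := by
    ext1
    show comp X a.g = a.g
    exact X_comp a.g_zero

end NottinghamElem

/-- The Nottingham group over `K`, realized as the units of the Nottingham monoid. -/
noncomputable abbrev NottinghamGroup (K : Type*) [CommRing K] := (NottinghamElem K)ˣ

/-- `h` belongs to `H^n(K)`: the coefficients in degrees `1,…,n-1` vanish
(the constant-coefficient-one condition being imposed separately). -/
def IsHn (n : ℕ) (f : PowerSeries K) : Prop := ∀ i, 0 < i → i < n → coeff i f = 0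

/-- `g` belongs to `N^n(K)`: the coefficients in degrees `2,…,n` vanish
(the conditions at degree `0`, `1` being imposed separately). -/
def IsNn (n : ℕ) (g : PowerSeries K) : Prop := ∀ j, 1 < j → j ≤ n → coeff j g = 0

/-- The subset `R^{m,n}(K) = H^m(K) ⋊ N^n(K)` of the Riordan group. -/
def Rmn (K : Type*) [CommRing K] (m n : ℕ) : Set (RiordanGroup K) :=
  {u | IsHn m ((u : RiordanElem K).h) ∧ IsNn n ((u : RiordanElem K).g)}

/-- The subset `R^n(K) = H^n(K) ⋊ N^n(K)` of the Riordan group. -/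
def Rn (K : Type*) [CommRing K] (n : ℕ) : Set (RiordanGroup K) := Rmn K n n


/- ------------------- auxiliary lemmas ------------------- -/

lemma comp_sub (f₁ f₂ g : PowerSeries K) :
    comp (f₁ - f₂) g = comp f₁ g - comp f₂ g := by
  ext n
  rw [map_sub, coeff_comp, coeff_comp, coeff_comp, ← Finset.sum_sub_distrib]
  exact Finset.sum_congr rfl fun d _ => by rw [map_sub, sub_mul]

lemma X_pow_comp {g : PowerSeries K} (hg : constantCoeff g = 0) (k : ℕ) :
    comp ((X : PowerSeries K) ^ k) g = g ^ k := by
  induction k with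
  | zero => simpa using one_comp g
  | succ k ih => rw [pow_succ, pow_succ, mul_comp hg, ih, X_comp hg]

lemma dvd_comp {g f : PowerSeries K} (hg : constantCoeff g = 0) {m : ℕ}
    (hf : (X : PowerSeries K) ^ m ∣ f) : (X : PowerSeries K) ^ m ∣ comp f g := by
  obtain ⟨q, rfl⟩ := hf
  rw [mul_comp hg, X_pow_comp hg]
  exact dvd_mul_of_dvd_left (pow_dvd_pow_of_dvd (PowerSeries.X_dvd_iff.2 hg) m) _

lemma comp_sub_comp_right (f : PowerSeries K) {w w' : PowerSeries K} {N : ℕ}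
    (hd : (X : PowerSeries K) ^ N ∣ w - w') :
    (X : PowerSeries K) ^ N ∣ comp f w - comp f w' := by
  rw [PowerSeries.X_pow_dvd_iff]
  intro i hi
  rw [map_sub, coeff_comp, coeff_comp, ← Finset.sum_sub_distrib]
  apply Finset.sum_eq_zero
  intro d _
  rw [← mul_sub]
  have hdvd : (X : PowerSeries K) ^ N ∣ w ^ d - w' ^ d :=
    hd.trans (sub_dvd_pow_sub_pow w w' d)
  have : coeff i (w ^ d) - coeff i (w' ^ d) = 0 := by
    rw [← map_sub]; exact PowerSeries.X_pow_dvd_iff.1 hdvd i hi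
  rw [this, mul_zero]

lemma pow_sub_pow_aux {w w' : PowerSeries K} {N : ℕ}
    (hw : (X : PowerSeries K) ∣ w) (hw' : (X : PowerSeries K) ∣ w')
    (hd : (X : PowerSeries K) ^ N ∣ w - w') (k : ℕ) :
    (X : PowerSeries K) ^ (N + k) ∣ w ^ (k + 1) - w' ^ (k + 1) := by
  rw [← geom_sum₂_mul w w' (k + 1)]
  have hS : (X : PowerSeries K) ^ k ∣
      ∑ i ∈ Finset.range (k + 1), w ^ i * w' ^ (k + 1 - 1 - i) := by
    apply Finset.dvd_sum
    intro i hi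
    simp only [Finset.mem_range] at hi
    have hk : (X : PowerSeries K) ^ k = X ^ i * X ^ (k + 1 - 1 - i) := by
      rw [← pow_add]; congr 1; omega
    rw [hk]
    exact mul_dvd_mul (pow_dvd_pow_of_dvd hw i) (pow_dvd_pow_of_dvd hw' _)
  calc (X : PowerSeries K) ^ (N + k) = X ^ k * X ^ N := by rw [← pow_add]; congr 1; omega
    _ ∣ _ := mul_dvd_mul hS hd

/-- Key estimate: if `f ≡ 1 mod X^m` and `w ≡ w' mod X^(N+1)` (with `w, w'` of
positive order) then `f∘w ≡ f∘w' mod X^(m+N)`. -/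
lemma comp_key {f w w' : PowerSeries K} {m N : ℕ}
    (hf : (X : PowerSeries K) ^ m ∣ f - 1)
    (hw : (X : PowerSeries K) ∣ w) (hw' : (X : PowerSeries K) ∣ w')
    (hd : (X : PowerSeries K) ^ (N + 1) ∣ w - w') :
    (X : PowerSeries K) ^ (m + N) ∣ comp f w - comp f w' := by
  obtain ⟨q, hq⟩ := hf
  have hw0 : constantCoeff w = 0 := PowerSeries.X_dvd_iff.1 hw
  have hw'0 : constantCoeff w' = 0 := PowerSeries.X_dvd_iff.1 hw'
  have e : ∀ (w₀ : PowerSeries K), constantCoeff w₀ = 0 →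
      comp f w₀ - 1 = w₀ ^ m * comp q w₀ := by
    intro w₀ h0
    calc comp f w₀ - 1 = comp f w₀ - comp 1 w₀ := by rw [one_comp]
      _ = comp (f - 1) w₀ := (comp_sub f 1 w₀).symm
      _ = comp ((X : PowerSeries K) ^ m * q) w₀ := by rw [hq]
      _ = w₀ ^ m * comp q w₀ := by rw [mul_comp h0, X_pow_comp h0]
  have main : comp f w - comp f w'
      = w ^ m * (comp q w - comp q w') + (w ^ m - w' ^ m) * comp q w' := by
    rw [show comp f w - comp f w' = (comp f w - 1) - (comp f w' - 1) by ring,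
      e w hw0, e w' hw'0]
    ring
  rw [main]
  apply dvd_add
  · have h1 : (X : PowerSeries K) ^ m * X ^ (N + 1) ∣
        w ^ m * (comp q w - comp q w') :=
      mul_dvd_mul (pow_dvd_pow_of_dvd hw m) (comp_sub_comp_right q hd)
    refine dvd_trans ?_ h1
    rw [← pow_add]
    exact pow_dvd_pow X (by omega)
  · rcases m with _ | k
    · simp
    · have h2 := pow_sub_pow_aux hw hw' hd k
      have h3 : (X : PowerSeries K) ^ (k + 1 + N) ∣ w ^ (k + 1) - w' ^ (k + 1) := by
        rw [show k + 1 + N = N + 1 + k by omega]; exact h2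
      exact dvd_mul_of_dvd_left h3 _

lemma isHn_iff {m : ℕ} {h : PowerSeries K} (h0 : constantCoeff h = 1) :
    IsHn m h ↔ (X : PowerSeries K) ^ m ∣ h - 1 := by
  rw [PowerSeries.X_pow_dvd_iff]
  constructor
  · intro H i hi
    rw [map_sub]
    rcases Nat.eq_zero_or_pos i with rfl | hpos
    · simp [h0]
    · rw [H i hpos hi, PowerSeries.coeff_one, if_neg hpos.ne', sub_zero]
  · intro H i hpos hi
    have := H i hi
    rw [map_sub, PowerSeries.coeff_one, if_neg hpos.ne', sub_zero] at this
    exact this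

lemma isNn_iff {n : ℕ} {g : PowerSeries K} (g0 : constantCoeff g = 0)
    (g1 : coeff 1 g = 1) :
    IsNn n g ↔ (X : PowerSeries K) ^ (n + 1) ∣ g - X := by
  rw [PowerSeries.X_pow_dvd_iff]
  constructor
  · intro H j hj
    rw [map_sub]
    match j with
    | 0 => simp [g0]
    | 1 => simp [g1]
    | (k + 2) =>
      rw [H _ (by omega) (by omega), PowerSeries.coeff_X, if_neg (by omega), sub_zero]
  · intro H j h1j hjn
    have := H j (by omega)
    rw [map_sub, PowerSeries.coeff_X, if_neg (by omega), sub_zero] at this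
    exact this

lemma mem_Rmn_iff {m n : ℕ} (u : RiordanGroup K) :
    u ∈ Rmn K m n ↔ ((X : PowerSeries K) ^ m ∣ (u : RiordanElem K).h - 1 ∧
      (X : PowerSeries K) ^ (n + 1) ∣ (u : RiordanElem K).g - X) := by
  unfold Rmn
  rw [Set.mem_setOf_eq, isHn_iff (u : RiordanElem K).h_zero,
    isNn_iff (u : RiordanElem K).g_zero (u : RiordanElem K).g_one]

lemma h_eq_of_mul_eq_one {a b : RiordanElem K} (hab : a * b = 1) :
    a.h * comp b.h a.g = 1 := by
  have := congrArg RiordanElem.h hab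
  simpa using this

lemma g_eq_of_mul_eq_one {a b : RiordanElem K} (hab : a * b = 1) :
    comp b.g a.g = X := by
  have := congrArg RiordanElem.g hab
  simpa using this

lemma X_dvd_g (a : RiordanElem K) : (X : PowerSeries K) ∣ a.g :=
  PowerSeries.X_dvd_iff.2 a.g_zero

/-- Inverse stability of the divisibility conditions. -/
lemma inv_conditions {m n : ℕ} (u : RiordanGroup K)
    (hh : (X : PowerSeries K) ^ m ∣ (u : RiordanElem K).h - 1)
    (hg : (X : PowerSeries K) ^ (n + 1) ∣ (u : RiordanElem K).g - X) :
    (X : PowerSeries K) ^ m ∣ ((u⁻¹ : RiordanGroup K) : RiordanElem K).h - 1 ∧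
    (X : PowerSeries K) ^ (n + 1) ∣ ((u⁻¹ : RiordanGroup K) : RiordanElem K).g - X := by
  set a := (u : RiordanElem K) with ha
  set b := ((u⁻¹ : RiordanGroup K) : RiordanElem K) with hb
  have hba : b * a = 1 := by rw [ha, hb]; exact u.inv_mul
  have hbh : b.h * comp a.h b.g = 1 := h_eq_of_mul_eq_one hba
  have hbg : comp a.g b.g = X := g_eq_of_mul_eq_one hba
  constructor
  · have e : b.h - 1 = -(b.h * (comp a.h b.g - 1)) := by
      rw [mul_sub, mul_one, hbh]; ring
    rw [e, dvd_neg]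
    apply Dvd.dvd.mul_left _ b.h
    have e2 : comp a.h b.g - 1 = comp (a.h - 1) b.g := by
      rw [comp_sub, one_comp]
    rw [e2]
    exact dvd_comp b.g_zero hh
  · have e : b.g - X = -(comp (a.g - X) b.g) := by
      rw [comp_sub, X_comp b.g_zero, hbg]; ring
    rw [e, dvd_neg]
    exact dvd_comp b.g_zero hg

/-- The subgroup `R^{m,n}(K)` of the Riordan group. -/
noncomputable def RmnSubgroup (K : Type*) [CommRing K] (m n : ℕ) :
    Subgroup (RiordanGroup K) where
  carrier := Rmn K m n
  one_mem' := by
    rw [mem_Rmn_iff]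
    constructor
    · simp
    · simp
  mul_mem' := by
    intro u v hu hv
    rw [mem_Rmn_iff] at hu hv ⊢
    obtain ⟨huh, hug⟩ := hu
    obtain ⟨hvh, hvg⟩ := hv
    have hval : ((u * v : RiordanGroup K) : RiordanElem K)
        = (u : RiordanElem K) * (v : RiordanElem K) := rfl
    set a := (u : RiordanElem K)
    set b := (v : RiordanElem K)
    rw [hval]
    constructor
    · show (X : PowerSeries K) ^ m ∣ a.h * comp b.h a.g - 1
      have hc : (X : PowerSeries K) ^ m ∣ comp b.h a.g - 1 := by
        have : comp b.h a.g - 1 = comp (b.h - 1) a.g := by rw [comp_sub, one_comp]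
        rw [this]; exact dvd_comp a.g_zero hvh
      have e : a.h * comp b.h a.g - 1
          = (a.h - 1) * comp b.h a.g + (comp b.h a.g - 1) := by ring
      rw [e]
      exact dvd_add (huh.mul_right _) hc
    · show (X : PowerSeries K) ^ (n + 1) ∣ comp b.g a.g - X
      have e : comp b.g a.g - X = comp (b.g - X) a.g + (a.g - X) := by
        rw [comp_sub, X_comp a.g_zero]; ring
      rw [e]
      exact dvd_add (dvd_comp a.g_zero hvg) hug
  inv_mem' := by
    intro u hu
    rw [mem_Rmn_iff] at hu ⊢
    exact inv_conditions u hu.1 hu.2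

lemma conj_mem {m₁ n₁ m₂ n₂ : ℕ} (h1 : m₁ ≤ m₂ + n₁)
    (u v : RiordanGroup K) (hu : u ∈ Rmn K m₂ n₂) (hv : v ∈ Rmn K m₁ n₁) :
    u * v * u⁻¹ ∈ Rmn K m₁ n₁ := by
  rw [mem_Rmn_iff] at hu hv ⊢
  obtain ⟨huh, hug⟩ := hu
  obtain ⟨hvh, hvg⟩ := hv
  obtain ⟨hch, _⟩ := inv_conditions u huh hug
  set a := (u : RiordanElem K) with ha
  set b := (v : RiordanElem K) with hb
  set c := ((u⁻¹ : RiordanGroup K) : RiordanElem K) with hc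
  have hval : ((u * v * u⁻¹ : RiordanGroup K) : RiordanElem K) = a * b * c := rfl
  have hac : a * c = 1 := by rw [ha, hc]; exact u.mul_inv
  have hach : a.h * comp c.h a.g = 1 := h_eq_of_mul_eq_one hac
  have hacg : comp c.g a.g = X := g_eq_of_mul_eq_one hac
  rw [hval]
  -- w = b.g ∘ a.g
  set w : PowerSeries K := comp b.g a.g with hw
  have hw0 : constantCoeff w = 0 := by
    rw [hw, constantCoeff_comp, b.g_zero]
  have hwa : (X : PowerSeries K) ^ (n₁ + 1) ∣ w - a.g := by
    have e : w - a.g = comp (b.g - X) a.g := by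
      rw [comp_sub, X_comp a.g_zero]
    rw [e]
    exact dvd_comp a.g_zero hvg
  constructor
  · show (X : PowerSeries K) ^ m₁ ∣ (a * b).h * comp c.h (a * b).g - 1
    have hgab : (a * b).g = w := rfl
    have hhab : (a * b).h = a.h * comp b.h a.g := rfl
    rw [hgab, hhab]
    have hB : (X : PowerSeries K) ^ m₁ ∣ comp b.h a.g - 1 := by
      have : comp b.h a.g - 1 = comp (b.h - 1) a.g := by rw [comp_sub, one_comp]
      rw [this]; exact dvd_comp a.g_zero hvh
    have hA : (X : PowerSeries K) ^ m₁ ∣ a.h * comp c.h w - 1 := by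
      have e : a.h * comp c.h w - 1 = a.h * (comp c.h w - comp c.h a.g) := by
        rw [mul_sub, hach]
      rw [e]
      have hkey : (X : PowerSeries K) ^ (m₂ + n₁) ∣ comp c.h w - comp c.h a.g :=
        comp_key hch (PowerSeries.X_dvd_iff.2 hw0) (X_dvd_g a) hwa
      exact Dvd.dvd.mul_left ((pow_dvd_pow X h1).trans hkey) a.h
    have e : a.h * comp b.h a.g * comp c.h w - 1
        = (a.h * comp c.h w) * (comp b.h a.g - 1) + (a.h * comp c.h w - 1) := by
      ring
    rw [e]
    exact dvd_add (hB.mul_left _) hA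
  · show (X : PowerSeries K) ^ (n₁ + 1) ∣ comp c.g (a * b).g - X
    have hgab : (a * b).g = w := rfl
    rw [hgab]
    have hfin := comp_sub_comp_right c.g hwa
    rwa [hacg] at hfin

/-- `R^{m₁,n₁}(K)` is a normal subgroup of `R^{m₂,n₂}(K)` whenever
`m₂ + n₁ ≥ m₁ ≥ m₂` and `n₁ ≥ n₂`. -/
theorem Rmn_normal_in_Rmn (K : Type*) [CommRing K] (m₁ n₁ m₂ n₂ : ℕ)
    (h1 : m₁ ≤ m₂ + n₁) (h2 : m₂ ≤ m₁) (h3 : n₂ ≤ n₁) :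
    ∃ H₁ H₂ : Subgroup (RiordanGroup K),
      (H₁ : Set (RiordanGroup K)) = Rmn K m₁ n₁ ∧
      (H₂ : Set (RiordanGroup K)) = Rmn K m₂ n₂ ∧
      H₁ ≤ H₂ ∧ (H₁.subgroupOf H₂).Normal := by
  refine ⟨RmnSubgroup K m₁ n₁, RmnSubgroup K m₂ n₂, rfl, rfl, ?_, ?_⟩
  · intro u hu
    have hu' : u ∈ Rmn K m₁ n₁ := hu
    rw [mem_Rmn_iff] at hu'
    show u ∈ Rmn K m₂ n₂
    rw [mem_Rmn_iff]
    exact ⟨(pow_dvd_pow X h2).trans hu'.1,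
      (pow_dvd_pow X (by omega)).trans hu'.2⟩
  · constructor
    intro x hx g
    rw [Subgroup.mem_subgroupOf] at hx ⊢
    have hg2 : (g : RiordanGroup K) ∈ Rmn K m₂ n₂ := g.2
    have hx1 : (x : RiordanGroup K) ∈ Rmn K m₁ n₁ := hx
    have := conj_mem h1 (g : RiordanGroup K) (x : RiordanGroup K) hg2 hx1
    exact this

end RiordanPaper
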